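/- Let (X, d) be a metric space, x₀ ∈ X, and let f, g : ([0,1], {0,1}) → (X, x₀) be loops at x₀ such that f is close to g rel {0,1} (in the approximation sense). Then for every open cover 𝒰 of X, the class [f * g⁻¹] ∈ π₁(X, x₀) lies in the Spanier group π₁(𝒰, x₀), assuming X is locally path connected. -/

import Mathlib

universe u

/-- The element of the fundamental group determined by a loop. -/
noncomputable def pathClass {X : Type u} [TopologicalSpace X] {x : X} (α : Path x x) :
    FundamentalGroup X x :=
  @FundamentalGroup.fromPath (TopCat.of X) _ x ⟦α⟧

/-- The Spanier group of `(X, x₀)` with respect to a cover `𝒰`: the subgroup of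
`π₁(X, x₀)` generated by classes of loops `u * v * u⁻¹` where `u` is a path from `x₀`
to a point `y` and `v` is a loop at `y` contained in some member of `𝒰`. -/
noncomputable def spanierGroup {X : Type u} [TopologicalSpace X] (𝒰 : Set (Set X)) (x₀ : X) :
    Subgroup (FundamentalGroup X x₀) :=
  Subgroup.closure {g | ∃ U ∈ 𝒰, ∃ (y : X) (u : Path x₀ y) (v : Path y y),
    Set.range v ⊆ U ∧ g = pathClass ((u.trans v).trans u.symm)}

/-- `𝒰` is an open cover of `X`. -/
def IsOpenCover {X : Type u} [TopologicalSpace X] (𝒰 : Set (Set X)) : Prop :=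
  (∀ U ∈ 𝒰, IsOpen U) ∧ ⋃₀ 𝒰 = Set.univ

/- ### Auxiliary machinery -/

open CategoryTheory unitInterval

attribute [local instance] Path.Homotopic.setoid

namespace SpanierClose

variable {X : Type u} [TopologicalSpace X]

/-- The morphism in the fundamental groupoid determined by a path. -/
def mor {x y : X} (p : Path x y) :
    FundamentalGroupoid.mk x ⟶ FundamentalGroupoid.mk y := ⟦p⟧

lemma mor_trans {x y z : X} (p : Path x y) (q : Path y z) :
    mor (p.trans q) = mor p ≫ mor q :=
  rfl

lemma mor_symm {x y : X} (p : Path x y) : mor p.symm = inv (mor p) := by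
  rw [← Groupoid.inv_eq_inv]; rfl

lemma mor_homotopic {x y : X} {p q : Path x y} (h : p.Homotopic q) : mor p = mor q :=
  Quotient.sound h

lemma cast_rfl_rfl {x y : X} (p : Path x y) : p.cast rfl rfl = p := rfl

lemma mor_cast {x y x' y' : X} (p : Path x y) (hx : x' = x) (hy : y' = y) :
    mor (p.cast hx hy) = eqToHom (congrArg FundamentalGroupoid.mk hx) ≫ mor p ≫
      eqToHom (congrArg FundamentalGroupoid.mk hy).symm := by
  subst hx; subst hy
  simp [cast_rfl_rfl]

lemma pathClass_eq {x : X} {α β : Path x x} (h : mor α = mor β) :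
    pathClass α = pathClass β := by
  unfold pathClass FundamentalGroup.fromPath
  exact congrArg _ h

lemma pathClass_congr {x : X} {α β : Path x x} (h : α.Homotopic β) :
    pathClass α = pathClass β :=
  pathClass_eq (Quotient.sound h)

lemma pathClass_mul {x : X} (α β : Path x x) :
    pathClass (α.trans β) = pathClass β * pathClass α := by
  exact mor_trans α β

lemma mor_cast_trans {x y z x' : X} (p : Path x y) (q : Path y z) (r : Path x z) (hx : x' = x)
    (h : (p.trans q).Homotopic r) :
    mor (p.cast hx rfl) ≫ mor q = mor (r.cast hx rfl) := by
  subst hx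
  rw [cast_rfl_rfl, cast_rfl_rfl, ← mor_trans]
  exact mor_homotopic h

/-- The subpath of `γ` from time `a` to time `b`. -/
def divI {x y : X} (γ : Path x y) (a b : I) (hab : a ≤ b) : Path (γ a) (γ b) where
  toFun t := γ ⟨(a : ℝ) + t * (b - a), by
    constructor
    · have := t.2.1; have : (a : ℝ) ≤ b := hab; nlinarith [a.2.1]
    · have h1 : (t : ℝ) * (b - a) ≤ 1 * (b - a) := by
        apply mul_le_mul_of_nonneg_right t.2.2
        have : (a : ℝ) ≤ b := hab; linarith
      have := b.2.2; linarith⟩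
  continuous_toFun := γ.continuous.comp (by
    apply Continuous.subtype_mk
    fun_prop)
  source' := by
    show γ _ = γ a
    congr 1
    ext
    simp
  target' := by
    show γ _ = γ b
    congr 1
    ext
    simp

lemma divI_mem_range {x y : X} (γ : Path x y) (a b : I) (hab : a ≤ b) (t : I) :
    ∃ s : I, a ≤ s ∧ s ≤ b ∧ divI γ a b hab t = γ s := by
  refine ⟨⟨(a : ℝ) + t * (b - a), _⟩, ?_, ?_, rfl⟩
  · show (a : ℝ) ≤ (a : ℝ) + t * (b - a)
    have := t.2.1; have : (a : ℝ) ≤ b := hab; nlinarith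
  · show (a : ℝ) + t * (b - a) ≤ (b : ℝ)
    have h1 : (t : ℝ) * (b - a) ≤ 1 * (b - a) := by
      apply mul_le_mul_of_nonneg_right t.2.2
      have : (a : ℝ) ≤ b := hab; linarith
    linarith

lemma divI_trans_homotopic {x y : X} (γ : Path x y) (a b c : I)
    (hab : a ≤ b) (hbc : b ≤ c) (hac : (a : ℝ) < c) :
    ((divI γ a b hab).trans (divI γ b c hbc)).Homotopic (divI γ a c (hab.trans hbc)) := by
  have hab' : (a : ℝ) ≤ b := hab
  have hbc' : (b : ℝ) ≤ c := hbc
  have hd : (0 : ℝ) < c - a := by linarith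
  set φfun : I → ℝ := fun t =>
    if (t : ℝ) ≤ 1 / 2 then 2 * t * (b - a) / (c - a)
    else ((b : ℝ) - a + (2 * t - 1) * (c - b)) / (c - a) with hφfun
  have hφmem : ∀ t : I, φfun t ∈ I := by
    intro t
    have ht0 := t.2.1; have ht1 := t.2.2
    simp only [hφfun]
    split_ifs with h
    · constructor
      · apply div_nonneg _ hd.le; nlinarith
      · rw [div_le_one hd]; nlinarith
    · push_neg at h
      constructor
      · apply div_nonneg _ hd.le; nlinarith
      · rw [div_le_one hd]; nlinarith
  set φ : I → I := fun t => ⟨φfun t, hφmem t⟩ with hφ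
  have hφc : Continuous φ := by
    apply Continuous.subtype_mk
    apply Continuous.if_le
    · fun_prop
    · fun_prop
    · exact continuous_subtype_val
    · exact continuous_const
    · intro t ht
      rw [ht]; ring
  have hφ0 : φ 0 = 0 := by
    apply Subtype.ext
    simp [hφ, hφfun]
  have hφ1 : φ 1 = 1 := by
    apply Subtype.ext
    have : ¬((1 : I) : ℝ) ≤ 1 / 2 := by norm_num
    simp only [hφ, hφfun, this, if_false]
    have h1 : ((1 : I) : ℝ) = 1 := rfl
    rw [h1, div_eq_one_iff_eq hd.ne']
    ring
  have heq : (divI γ a b hab).trans (divI γ b c hbc) =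
      (divI γ a c (hab.trans hbc)).reparam φ hφc hφ0 hφ1 := by
    ext t
    rw [Path.trans_apply]
    split_ifs with h
    · show γ _ = γ _
      congr 1
      apply Subtype.ext
      show (a : ℝ) + (2 * t) * (b - a) = (a : ℝ) + φfun t * (c - a)
      simp only [hφfun, if_pos h]
      field_simp
    · show γ _ = γ _
      congr 1
      apply Subtype.ext
      show (b : ℝ) + (2 * t - 1) * (c - b) = (a : ℝ) + φfun t * (c - a)
      simp only [hφfun, if_neg h]
      field_simp
      ring
  rw [heq]
  exact (Path.Homotopic.refl _).trans
    (⟨Path.Homotopy.reparam _ φ hφc hφ0 hφ1⟩ : Path.Homotopic _ _) |>.symm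
    |>.trans (Path.Homotopic.refl _)

end SpanierClose

open SpanierClose Metric Set

/-- If loops `f` and `g` at `x₀` in a locally path connected metric space satisfy the
approximation property of closeness rel `{0,1}` — for every `ε > 0` some loop homotopic
rel endpoints to `f` is uniformly `ε`-close to `g` — then `[f * g⁻¹]` lies in the
Spanier group with respect to every open cover. -/
theorem close_loops_in_spanierGroup {X : Type u} [MetricSpace X]
    [LocallyPathConnectedSpace X] (x₀ : X) (f g : Path x₀ x₀)
    (hclose : ∀ ε > (0 : ℝ), ∃ f' : Path x₀ x₀, f'.Homotopic f ∧
      ∀ s : unitInterval, dist (f' s) (g s) < ε)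
    (𝒰 : Set (Set X)) (h𝒰 : IsOpenCover 𝒰) :
    pathClass (f.trans g.symm) ∈ spanierGroup 𝒰 x₀ := by
  classical
  obtain ⟨hop, hcov⟩ := h𝒰
  set K : Set X := Set.range g with hKdef
  have hKc : IsCompact K := isCompact_range g.continuous
  -- Lebesgue number δ for 𝒰
  obtain ⟨δ, hδ, hleb⟩ := lebesgue_number_lemma_of_metric_sUnion hKc hop
    (by rw [hcov]; exact Set.subset_univ K)
  -- Lebesgue number ε for the cover by path components of small balls
  have hKcov : K ⊆ ⋃ k : K, pathComponentIn (Metric.ball (k : X) (δ / 5)) (k : X) := by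
    intro k hk
    exact Set.mem_iUnion.2 ⟨⟨k, hk⟩, mem_pathComponentIn_self (Metric.mem_ball_self
      (by positivity))⟩
  obtain ⟨ε, hε, hleb2⟩ := lebesgue_number_lemma_of_metric hKc
    (fun k => Metric.isOpen_ball.pathComponentIn _) hKcov
  -- the modulus η
  set η : ℝ := min (ε / 3) (δ / 15) with hηdef
  have hη : 0 < η := lt_min (by positivity) (by positivity)
  have hηε : η ≤ ε / 3 := min_le_left _ _
  have hηδ : η ≤ δ / 15 := min_le_right _ _
  -- uniform continuity of g
  have hgu : ∃ dp > (0 : ℝ), ∀ s t : I, dist s t < dp → dist (g s) (g t) < η := by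
    have hu : UniformContinuous (g : I → X) :=
      CompactSpace.uniformContinuous_of_continuous g.continuous
    rw [Metric.uniformContinuous_iff] at hu
    obtain ⟨dp, hdp, h⟩ := hu η hη
    exact ⟨dp, hdp, fun s t hst => h hst⟩
  obtain ⟨dp, hdp, hgub⟩ := hgu
  obtain ⟨n, hn⟩ := exists_nat_one_div_lt hdp
  set N : ℕ := n + 1 with hNdef
  have hN : 0 < N := Nat.succ_pos n
  have hNR : (0 : ℝ) < N := by exact_mod_cast hN
  -- the approximating loop f'
  obtain ⟨f', hf'f, hf'g⟩ := hclose η hη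
  -- the partition
  set τ : ℕ → I := fun j => ⟨min ((j : ℝ) / N) 1,
    ⟨le_min (by positivity) zero_le_one, min_le_right _ _⟩⟩ with hτdef
  have hτcoe : ∀ j : ℕ, j ≤ N → (τ j : ℝ) = (j : ℝ) / N := by
    intro j hj
    show min ((j : ℝ) / N) 1 = (j : ℝ) / N
    rw [min_eq_left]
    rw [div_le_one hNR]
    exact_mod_cast hj
  have hτmono : ∀ j : ℕ, τ j ≤ τ (j + 1) := by
    intro j
    show min ((j : ℝ) / N) 1 ≤ min (((j + 1 : ℕ) : ℝ) / N) 1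
    apply min_le_min _ le_rfl
    gcongr
    exact_mod_cast Nat.le_succ j
  have hτN : τ N = 1 := by
    apply Subtype.ext
    show min ((N : ℝ) / N) 1 = 1
    rw [div_self hNR.ne']
    exact min_self 1
  have hτ0 : (τ 0 : ℝ) = 0 := by
    rw [hτcoe 0 (Nat.zero_le N)]
    simp
  -- oscillation of g on subintervals
  have hosc : ∀ j : ℕ, j < N → ∀ s : I, (τ j : ℝ) ≤ s → (s : ℝ) ≤ τ (j + 1) →
      dist (g s) (g (τ j)) < η := by
    intro j hj s h1 h2
    apply hgub
    rw [Subtype.dist_eq, Real.dist_eq, abs_of_nonneg (by linarith)]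
    have e1 : (τ j : ℝ) = (j : ℝ) / N := hτcoe j hj.le
    have e2 : (τ (j + 1) : ℝ) = ((j + 1 : ℕ) : ℝ) / N := hτcoe (j + 1) hj
    have e3 : ((j + 1 : ℕ) : ℝ) / N = (j : ℝ) / N + 1 / N := by
      push_cast; ring
    have e4 : (1 : ℝ) / N < dp := by
      have : (N : ℝ) = (n : ℝ) + 1 := by push_cast [hNdef]; ring
      rw [this]; exact hn
    rw [e2, e3] at h2
    rw [e1]
    linarith
  -- centers
  have hctr' : ∀ j : ℕ, ∃ k : K, Metric.ball (g (τ j)) ε ⊆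
      pathComponentIn (Metric.ball (k : X) (δ / 5)) (k : X) := fun j => hleb2 _ ⟨τ j, rfl⟩
  choose ctr hctr using hctr'
  -- members of the cover
  have hU' : ∀ j : ℕ, ∃ U ∈ 𝒰, Metric.ball ((ctr j : X)) δ ⊆ U := fun j => hleb _ (ctr j).2
  choose U hUmem hUball using hU'
  have hgctr : ∀ j, dist (g (τ j)) ((ctr j : X)) < δ / 5 := by
    intro j
    have h := pathComponentIn_subset (hctr j (Metric.mem_ball_self hε))
    rwa [Metric.mem_ball] at h
  have hf'mem : ∀ j, f' (τ j) ∈ Metric.ball (g (τ j)) ε := by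
    intro j
    rw [Metric.mem_ball]
    have := hf'g (τ j)
    linarith
  -- connecting paths
  have hc' : ∀ j : ℕ, ∃ c : Path (f' (τ j)) (g (τ j)),
      ∀ t, c t ∈ Metric.ball ((ctr j : X)) (δ / 5) := by
    intro j
    have h1 : JoinedIn (Metric.ball ((ctr j : X)) (δ / 5)) ((ctr j : X)) (f' (τ j)) :=
      hctr j (hf'mem j)
    have h2 : JoinedIn (Metric.ball ((ctr j : X)) (δ / 5)) ((ctr j : X)) (g (τ j)) :=
      hctr j (Metric.mem_ball_self hε)
    exact ⟨(h1.symm.trans h2).somePath, (h1.symm.trans h2).somePath_mem⟩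
  choose c hc using hc'
  -- initial segments of f' and g
  set Fp : ∀ j : ℕ, Path x₀ (f' (τ j)) :=
    fun j => (divI f' 0 (τ j) nonneg').cast f'.source.symm rfl with hFp
  set Gp : ∀ j : ℕ, Path x₀ (g (τ j)) :=
    fun j => (divI g 0 (τ j) nonneg').cast g.source.symm rfl with hGp
  -- the main induction
  have main : ∀ j : ℕ, j ≤ N →
      pathClass (((Fp j).trans (c j)).trans (Gp j).symm) ∈ spanierGroup 𝒰 x₀ := by
    intro j
    induction j with
    | zero =>
      intro _
      have heq : pathClass (((Fp 0).trans (c 0)).trans (Gp 0).symm) =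
          pathClass (((Fp 0).trans (((c 0).trans (Gp 0).symm).trans (Fp 0))).trans
            (Fp 0).symm) := by
        apply pathClass_eq
        simp only [mor_trans, mor_symm]
        simp
      rw [heq]
      apply Subgroup.subset_closure
      refine ⟨U 0, hUmem 0, f' (τ 0), Fp 0, ((c 0).trans (Gp 0).symm).trans (Fp 0), ?_, rfl⟩
      have hF0 : ∀ t : I, (Fp 0) t = f' (τ 0) := by
        intro t
        show f' _ = f' (τ 0)
        congr 1
        apply Subtype.ext
        show ((0 : I) : ℝ) + t * ((τ 0 : ℝ) - ((0 : I) : ℝ)) = (τ 0 : ℝ)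
        rw [hτ0]; norm_num
      have hG0 : ∀ t : I, (Gp 0) t = g (τ 0) := by
        intro t
        show g _ = g (τ 0)
        congr 1
        apply Subtype.ext
        show ((0 : I) : ℝ) + t * ((τ 0 : ℝ) - ((0 : I) : ℝ)) = (τ 0 : ℝ)
        rw [hτ0]; norm_num
      rw [Path.trans_range, Path.trans_range, Path.symm_range]
      have hball : Metric.ball ((ctr 0 : X)) δ ⊆ U 0 := hUball 0
      refine Set.union_subset (Set.union_subset ?_ ?_) ?_
      · rintro z ⟨t, rfl⟩
        apply hball
        have := hc 0 t
        rw [Metric.mem_ball] at this ⊢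
        linarith
      · rintro z ⟨t, rfl⟩
        apply hball
        rw [hG0 t, Metric.mem_ball]
        exact lt_trans (hgctr 0) (by linarith)
      · rintro z ⟨t, rfl⟩
        apply hball
        rw [hF0 t, Metric.mem_ball]
        have h1 := hf'g (τ 0)
        have h2 := hgctr 0
        calc dist (f' (τ 0)) ((ctr 0 : X)) ≤
            dist (f' (τ 0)) (g (τ 0)) + dist (g (τ 0)) ((ctr 0 : X)) := dist_triangle _ _ _
          _ < δ := by linarith
    | succ j ih =>
      intro hj
      have hjN : j < N := hj
      have ihm := ih (Nat.le_of_succ_le hj)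
      have hpos : ((0 : I) : ℝ) < (τ (j + 1) : ℝ) := by
        rw [hτcoe (j + 1) hj]
        show (0 : ℝ) < _
        positivity
      set A : Path (f' (τ j)) (f' (τ (j + 1))) := divI f' (τ j) (τ (j + 1)) (hτmono j) with hA
      set B : Path (g (τ j)) (g (τ (j + 1))) := divI g (τ j) (τ (j + 1)) (hτmono j) with hB
      set v : Path (g (τ j)) (g (τ j)) :=
        ((c j).symm.trans A).trans ((c (j + 1)).trans B.symm) with hv
      -- the generator
      have hgen : pathClass (((Gp j).trans v).trans (Gp j).symm) ∈ spanierGroup 𝒰 x₀ := by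
        apply Subgroup.subset_closure
        refine ⟨U j, hUmem j, g (τ j), Gp j, v, ?_, rfl⟩
        rw [hv, Path.trans_range, Path.trans_range, Path.trans_range, Path.symm_range,
          Path.symm_range]
        have hball : Metric.ball ((ctr j : X)) δ ⊆ U j := hUball j
        have hd1 := hgctr j
        have hd2 := hgctr (j + 1)
        have hd3 : dist (g (τ (j + 1))) (g (τ j)) < η :=
          hosc j hjN (τ (j + 1)) (hτmono j) le_rfl
        refine Set.union_subset (Set.union_subset ?_ ?_) (Set.union_subset ?_ ?_)
        · rintro z ⟨t, rfl⟩
          apply hball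
          have := hc j t
          rw [Metric.mem_ball] at this ⊢
          linarith
        · rintro z ⟨t, rfl⟩
          obtain ⟨s, hs1, hs2, heqs⟩ := divI_mem_range f' (τ j) (τ (j + 1)) (hτmono j) t
          rw [hA, heqs]
          apply hball
          rw [Metric.mem_ball]
          have o1 := hf'g s
          have o2 := hosc j hjN s hs1 hs2
          calc dist (f' s) ((ctr j : X)) ≤
              dist (f' s) (g s) + dist (g s) (g (τ j)) + dist (g (τ j)) ((ctr j : X)) :=
                dist_triangle4 _ _ _ _
            _ < δ := by linarith
        · rintro z ⟨t, rfl⟩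
          apply hball
          have h1 := hc (j + 1) t
          rw [Metric.mem_ball] at h1 ⊢
          have h2 : dist ((ctr (j + 1) : X)) (g (τ (j + 1))) = dist (g (τ (j + 1))) ((ctr (j + 1) : X)) :=
            dist_comm _ _
          calc dist ((c (j + 1)) t) ((ctr j : X)) ≤
              dist ((c (j + 1)) t) ((ctr (j + 1) : X)) + dist ((ctr (j + 1) : X)) (g (τ (j + 1)))
                + dist (g (τ (j + 1))) ((ctr j : X)) := dist_triangle4 _ _ _ _
            _ ≤ dist ((c (j + 1)) t) ((ctr (j + 1) : X)) + dist ((ctr (j + 1) : X)) (g (τ (j + 1)))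
                + (dist (g (τ (j + 1))) (g (τ j)) + dist (g (τ j)) ((ctr j : X))) := by
                  have := dist_triangle (g (τ (j + 1))) (g (τ j)) ((ctr j : X))
                  linarith
            _ < δ := by rw [h2]; linarith
        · rintro z ⟨t, rfl⟩
          obtain ⟨s, hs1, hs2, heqs⟩ := divI_mem_range g (τ j) (τ (j + 1)) (hτmono j) t
          rw [hB, heqs]
          apply hball
          rw [Metric.mem_ball]
          have o2 := hosc j hjN s hs1 hs2
          calc dist (g s) ((ctr j : X)) ≤
              dist (g s) (g (τ j)) + dist (g (τ j)) ((ctr j : X)) := dist_triangle _ _ _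
            _ < δ := by linarith
      -- the homotopy identity
      have hhomF : ((divI f' 0 (τ j) nonneg').trans A).Homotopic (divI f' 0 (τ (j + 1)) nonneg') := by
        rw [hA]
        exact divI_trans_homotopic f' 0 (τ j) (τ (j + 1)) nonneg' (hτmono j) hpos
      have hhomG : ((divI g 0 (τ j) nonneg').trans B).Homotopic (divI g 0 (τ (j + 1)) nonneg') := by
        rw [hB]
        exact divI_trans_homotopic g 0 (τ j) (τ (j + 1)) nonneg' (hτmono j) hpos
      have hF : mor (Fp (j + 1)) = mor (Fp j) ≫ mor A := by
        rw [hFp]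
        exact (mor_cast_trans _ _ _ _ hhomF).symm
      have hG : mor (Gp (j + 1)) = mor (Gp j) ≫ mor B := by
        rw [hGp]
        exact (mor_cast_trans _ _ _ _ hhomG).symm
      have heq : pathClass (((Fp (j + 1)).trans (c (j + 1))).trans (Gp (j + 1)).symm) =
          pathClass ((((Fp j).trans (c j)).trans (Gp j).symm).trans
            (((Gp j).trans v).trans (Gp j).symm)) := by
        apply pathClass_eq
        simp only [mor_trans, mor_symm]
        rw [hF, hG]
        simp only [hv, mor_trans, mor_symm]
        simp
      rw [heq, pathClass_mul]
      exact mul_mem hgen ihm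
  have hmain := main N le_rfl
  -- relating the endpoint data
  have h1 : f' (τ N) = x₀ := by rw [hτN]; exact f'.target
  have h2 : g (τ N) = x₀ := by rw [hτN]; exact g.target
  have hτNcoe : (τ N : ℝ) = 1 := by rw [hτN]; rfl
  have hFN : Fp N = f'.cast rfl h1 := by
    ext t
    show f' _ = _
    have hr : (f'.cast rfl h1) t = f' t := rfl
    rw [hr]
    congr 1
    apply Subtype.ext
    show ((0 : I) : ℝ) + t * ((τ N : ℝ) - ((0 : I) : ℝ)) = (t : ℝ)
    rw [hτNcoe]; norm_num
  have hGN : Gp N = g.cast rfl h2 := by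
    ext t
    show g _ = _
    have hr : (g.cast rfl h2) t = g t := rfl
    rw [hr]
    congr 1
    apply Subtype.ext
    show ((0 : I) : ℝ) + t * ((τ N : ℝ) - ((0 : I) : ℝ)) = (t : ℝ)
    rw [hτNcoe]; norm_num
  set w : Path x₀ x₀ := (c N).cast h1.symm h2.symm with hw
  have hgenN : pathClass ((g.trans w.symm).trans g.symm) ∈ spanierGroup 𝒰 x₀ := by
    apply Subgroup.subset_closure
    refine ⟨U N, hUmem N, x₀, g, w.symm, ?_, rfl⟩
    rw [Path.symm_range]
    rintro z ⟨t, rfl⟩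
    apply hUball N
    have h3 : w t = (c N) t := rfl
    rw [h3]
    have := hc N t
    rw [Metric.mem_ball] at this ⊢
    linarith
  have hkey : pathClass (f.trans g.symm) =
      pathClass ((((Fp N).trans (c N)).trans (Gp N).symm).trans
        ((g.trans w.symm).trans g.symm)) := by
    apply pathClass_eq
    rw [hFN, hGN]
    simp only [hw, mor_trans, mor_symm, mor_cast]
    rw [mor_homotopic hf'f]
    simp
  rw [hkey, pathClass_mul]
  exact mul_mem hgenN hmain
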